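/- arXiv:1512.07392 — 2 statements merged into one kernel-verified Lean document; each statement's English description precedes it below -/
import Mathlib

section
/- Fix weights lambda, lambda' > 0 and vectors x, y, z, w, x', y', z', w' in R^d, and let h be in C^3(R^d). Then | lambda (h(x) - h(y) - (h(z) - h(w))) - lambda' (h(x') - h(y') - (h(z') - h(w'))) - <grad h(z), lambda (x - y - (z - w)) - lambda' (x' - y' - (z' - w'))> | is at most M_2(h) * [ ||y' - x'||_2 ||lambda (z - x) - lambda' (z' - x')||_2 + lambda' ||z - z'||_2 ||x' - y' - (z' - w')||_2 + lambda ||z - x||_2 ||(y - x) - (y' - x')||_2 + (1/2)( lambda ||x - y - (z - w)||_2 ||x - y + z - w||_2 + lambda' ||x' - y' - (z' - w')||_2 ||x' - y' + z' - w'||_2 ) ] plus M_3(h) * [ (1/2) ||y' - x'||_2 ( 2 lambda' ||x - x'||_2 ||z' - x'||_2 + lambda ||z - x||_2^2 + lambda' ||z' - x'||_2^2 ) + (1/2)( lambda ||z - x||_2 ||y - x||_2^2 + lambda' ||z' - x'||_2 ||y' - x'||_2^2 ) + (1/6)( lambda ||w - z||_2^3 + lambda ||y - x||_2^3 + lambda'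 ||w' - z'||_2^3 + lambda' ||y' - x'||_2^3 ) ]. -/
open scoped RealInnerProductSpace

private lemma integral_bound_aux {F : Type*} [NormedAddCommGroup F] [NormedSpace ℝ F]
    [CompleteSpace F]
    (φ φ' : ℝ → F) (hφ : ∀ t, HasDerivAt φ (φ' t) t)
    (hc : Continuous φ') (C : ℝ) (n : ℕ)
    (hb : ∀ t ∈ Set.Icc (0:ℝ) 1, ‖φ' t‖ ≤ C * t ^ n) :
    ‖φ 1 - φ 0‖ ≤ C / (n + 1) := by
  have hC : 0 ≤ C := le_trans (norm_nonneg (φ' 1)) (by simpa using hb 1 ⟨zero_le_one, le_rfl⟩)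
  have key : ∫ t in (0:ℝ)..1, φ' t = φ 1 - φ 0 :=
    intervalIntegral.integral_eq_sub_of_hasDerivAt (fun t _ => hφ t)
      (hc.intervalIntegrable 0 1)
  rw [← key]
  have h1 : ‖∫ t in (0:ℝ)..1, φ' t‖ ≤ |∫ t in (0:ℝ)..1, C * t ^ n| := by
    apply intervalIntegral.norm_integral_le_abs_of_norm_le
    · filter_upwards [MeasureTheory.ae_restrict_mem measurableSet_Ioc] with t ht
      rw [Set.uIoc_of_le zero_le_one] at ht
      exact hb t ⟨ht.1.le, ht.2⟩
    · exact (Continuous.intervalIntegrable (by continuity) 0 1)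
  have h2 : ∫ t in (0:ℝ)..1, C * t ^ n = C / (n + 1) := by
    rw [intervalIntegral.integral_const_mul, integral_pow]
    simp
    ring
  rw [h2] at h1
  calc ‖∫ t in (0:ℝ)..1, φ' t‖ ≤ |C / (n+1)| := h1
    _ = C / (n+1) := abs_of_nonneg (by positivity)

set_option maxHeartbeats 2000000

/-- Third-order weighted difference bound (Lemma 3, inequality (5) of the paper):
for weights `λ, λ' > 0`, points `x, y, z, w, x', y', z', w' ∈ ℝ^d`, and `h ∈ C³(ℝ^d)`
with `M₂(h) ≤ M2` (Lipschitz constant of the gradient) and `M₃(h) ≤ M3`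
(Lipschitz constant of the Hessian, `ℓ₂` operator norms). -/
theorem third_order_weighted_difference_bound {d : ℕ}
    (lam lam' : ℝ) (hlam : 0 < lam) (hlam' : 0 < lam')
    (x y z w x' y' z' w' : EuclideanSpace ℝ (Fin d))
    (h : EuclideanSpace ℝ (Fin d) → ℝ) (hh : ContDiff ℝ 3 h)
    (M2 M3 : ℝ)
    (hM2 : ∀ a b, ‖fderiv ℝ h a - fderiv ℝ h b‖ ≤ M2 * ‖a - b‖)
    (hM3 : ∀ a b, ‖iteratedFDeriv ℝ 2 h a - iteratedFDeriv ℝ 2 h b‖ ≤ M3 * ‖a - b‖) :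
    |lam * (h x - h y - (h z - h w)) - lam' * (h x' - h y' - (h z' - h w'))
        - ⟪gradient h z, lam • (x - y - (z - w)) - lam' • (x' - y' - (z' - w'))⟫|
      ≤ M2 * (‖y' - x'‖ * ‖lam • (z - x) - lam' • (z' - x')‖
            + lam' * ‖z - z'‖ * ‖x' - y' - (z' - w')‖
            + lam * ‖z - x‖ * ‖(y - x) - (y' - x')‖
            + (1 / 2) * (lam * ‖x - y - (z - w)‖ * ‖x - y + z - w‖
                + lam' * ‖x' - y' - (z' - w')‖ * ‖x' - y' + z' - w'‖))
        + M3 * ((1 / 2) * ‖y' - x'‖ *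
              (2 * lam' * ‖x - x'‖ * ‖z' - x'‖ + lam * ‖z - x‖ ^ 2 + lam' * ‖z' - x'‖ ^ 2)
            + (1 / 2) * (lam * ‖z - x‖ * ‖y - x‖ ^ 2 + lam' * ‖z' - x'‖ * ‖y' - x'‖ ^ 2)
            + (1 / 6) * (lam * ‖w - z‖ ^ 3 + lam * ‖y - x‖ ^ 3
                + lam' * ‖w' - z'‖ ^ 3 + lam' * ‖y' - x'‖ ^ 3)) := by
  rcases subsingleton_or_nontrivial (EuclideanSpace ℝ (Fin d)) with hs | hs
  · -- trivial case: the space is a single point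
    have e0 : ∀ v : EuclideanSpace ℝ (Fin d), ‖v‖ = 0 := fun v => by
      rw [Subsingleton.elim v 0, norm_zero]
    have eh : ∀ a b : EuclideanSpace ℝ (Fin d), h a = h b := fun a b => by
      rw [Subsingleton.elim a b]
    rw [Subsingleton.elim (lam • (x - y - (z - w)) - lam' • (x' - y' - (z' - w')))
      (0 : EuclideanSpace ℝ (Fin d)), eh x y, eh z w, eh x' y', eh z' w']
    simp only [e0, inner_zero_right]
    norm_num
  -- nontrivial case
  obtain ⟨a0, b0, hab⟩ := exists_pair_ne (EuclideanSpace ℝ (Fin d))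
  have hab' : 0 < ‖a0 - b0‖ := by
    rw [norm_sub_pos_iff]
    exact hab
  have hM2nn : 0 ≤ M2 := by
    have h1 := (norm_nonneg (fderiv ℝ h a0 - fderiv ℝ h b0)).trans (hM2 a0 b0)
    nlinarith
  have hM3nn : 0 ≤ M3 := by
    have h1 := (norm_nonneg _).trans (hM3 a0 b0)
    nlinarith
  set f : EuclideanSpace ℝ (Fin d) → (EuclideanSpace ℝ (Fin d) →L[ℝ] ℝ) := fderiv ℝ h with hfdef
  set B : EuclideanSpace ℝ (Fin d) → (EuclideanSpace ℝ (Fin d) →L[ℝ] (EuclideanSpace ℝ (Fin d) →L[ℝ] ℝ)) :=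
    fderiv ℝ f with hBdef
  have hdh : Differentiable ℝ h := hh.differentiable (by norm_num)
  have hh2 : ContDiff ℝ 2 f := hh.fderiv_right (by norm_num)
  have hdf : Differentiable ℝ f := hh2.differentiable (by norm_num)
  have hB1 : ContDiff ℝ 1 B := hh2.fderiv_right (le_refl _)
  have hBc : Continuous B := hB1.continuous
  -- Hessian difference bound
  have hB3 : ∀ a b : EuclideanSpace ℝ (Fin d), ‖B a - B b‖ ≤ M3 * ‖a - b‖ := by
    intro a b
    apply ContinuousLinearMap.opNorm_le_bound _ (by positivity)
    intro v
    apply ContinuousLinearMap.opNorm_le_bound _ (by positivity)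
    intro u
    have e : (B a - B b) v u = (iteratedFDeriv ℝ 2 h a - iteratedFDeriv ℝ 2 h b) ![v, u] := by
      simp [ContinuousLinearMap.sub_apply, iteratedFDeriv_two_apply, hBdef, hfdef]
    rw [Real.norm_eq_abs, e]
    calc |(iteratedFDeriv ℝ 2 h a - iteratedFDeriv ℝ 2 h b) ![v, u]|
        ≤ ‖iteratedFDeriv ℝ 2 h a - iteratedFDeriv ℝ 2 h b‖ * (‖v‖ * ‖u‖) := by
          have := (iteratedFDeriv ℝ 2 h a - iteratedFDeriv ℝ 2 h b).le_opNorm ![v, u]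
          simpa [Fin.prod_univ_two, mul_assoc] using this
      _ ≤ M3 * ‖a - b‖ * (‖v‖ * ‖u‖) := by
          have := hM3 a b
          have hnn : (0:ℝ) ≤ ‖v‖ * ‖u‖ := by positivity
          nlinarith [norm_nonneg (iteratedFDeriv ℝ 2 h a - iteratedFDeriv ℝ 2 h b)]
      _ = M3 * ‖a - b‖ * ‖v‖ * ‖u‖ := by ring
  -- Hessian norm bound
  have hB2 : ∀ a : EuclideanSpace ℝ (Fin d), ‖B a‖ ≤ M2 := by
    intro a
    apply (hdf a).hasFDerivAt.le_of_lip' hM2nn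
    filter_upwards with b using hM2 b a
  -- symmetry of the Hessian
  have hBsymm : ∀ (a v u : EuclideanSpace ℝ (Fin d)), B a v u = B a u v := fun a v u =>
    second_derivative_symmetric (fun p => (hdh p).hasFDerivAt) (hdf a).hasFDerivAt v u
  -- line derivatives
  have hline : ∀ (a v : EuclideanSpace ℝ (Fin d)) (t : ℝ),
      HasDerivAt (fun s : ℝ => a + s • v) v t := by
    intro a v t
    simpa using ((hasDerivAt_id t).smul_const v).const_add a
  have hφf : ∀ (a v : EuclideanSpace ℝ (Fin d)) (t : ℝ),
      HasDerivAt (fun s : ℝ => h (a + s • v)) (f (a + t • v) v) t :=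
    fun a v t => ((hdh _).hasFDerivAt.comp_hasDerivAt t (hline a v t))
  have hφB : ∀ (a v : EuclideanSpace ℝ (Fin d)) (t : ℝ),
      HasDerivAt (fun s : ℝ => f (a + s • v)) (B (a + t • v) v) t :=
    fun a v t => ((hdf _).hasFDerivAt.comp_hasDerivAt t (hline a v t))
  -- L3: gradient Taylor
  have L3 : ∀ a v : EuclideanSpace ℝ (Fin d),
      ‖f (a + v) - f a - B a v‖ ≤ M3 / 2 * ‖v‖ ^ 2 := by
    intro a v
    have key := integral_bound_aux (fun t => f (a + t • v) - t • (B a v))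
        (fun t => B (a + t • v) v - B a v)
        (fun t => by
          have h0 := (hφB a v t).sub ((hasDerivAt_id t).smul_const (B a v))
          rw [one_smul] at h0
          exact h0)
        (((hBc.comp (by continuity : Continuous fun t : ℝ => a + t • v)).clm_apply
          continuous_const).sub continuous_const)
        (M3 * ‖v‖ ^ 2) 1 ?_
    · simpa [add_comm, sub_sub] using key.trans (le_of_eq (by ring))
    · intro t ht
      have h1 : ‖B (a + t • v) v - B a v‖ ≤ ‖B (a + t • v) - B a‖ * ‖v‖ := by
        simpa [ContinuousLinearMap.sub_apply] using (B (a + t • v) - B a).le_opNorm v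
      have h2 := hB3 (a + t • v) a
      have h3 : ‖a + t • v - a‖ = t * ‖v‖ := by
        simp [norm_smul, abs_of_nonneg ht.1]
      rw [h3] at h2
      have hv : (0:ℝ) ≤ ‖v‖ := norm_nonneg v
      calc ‖B (a + t • v) v - B a v‖ ≤ ‖B (a + t • v) - B a‖ * ‖v‖ := h1
        _ ≤ (M3 * (t * ‖v‖)) * ‖v‖ := by nlinarith [norm_nonneg (B (a + t • v) - B a)]
        _ = M3 * ‖v‖ ^ 2 * t ^ 1 := by ring
  -- L2: second-order Taylor
  have L2 : ∀ a v : EuclideanSpace ℝ (Fin d),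
      |h (a + v) - h a - f a v - 1 / 2 * B a v v| ≤ M3 / 6 * ‖v‖ ^ 3 := by
    intro a v
    have hd : ∀ t : ℝ, HasDerivAt
        (fun s : ℝ => h (a + s • v) - s * f a v - s ^ 2 / 2 * B a v v)
        (f (a + t • v) v - f a v - t * B a v v) t := by
      intro t
      have h1 := (hφf a v t).sub ((hasDerivAt_id t).mul_const (f a v))
      have h2 := ((hasDerivAt_pow 2 t).div_const 2).mul_const (B a v v)
      have h3 := h1.sub h2
      refine h3.congr_deriv ?_
      norm_num
    have hcont : Continuous fun t : ℝ => f (a + t • v) v - f a v - t * B a v v := by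
      have : Continuous fun t : ℝ => f (a + t • v) :=
        hh2.continuous.comp (by continuity)
      exact ((this.clm_apply continuous_const).sub continuous_const).sub
        (continuous_id.mul continuous_const)
    have key := integral_bound_aux _ _ hd hcont (M3 / 2 * ‖v‖ ^ 3) 2 ?_
    · have e1 : ((1:ℝ) • v) = v := one_smul _ _
      rw [show ((2:ℕ):ℝ) + 1 = 3 by norm_num] at key
      calc |h (a + v) - h a - f a v - 1 / 2 * B a v v|
          = ‖(h (a + (1:ℝ) • v) - 1 * f a v - 1 ^ 2 / 2 * B a v v)
            - (h (a + (0:ℝ) • v) - 0 * f a v - 0 ^ 2 / 2 * B a v v)‖ := by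
            rw [Real.norm_eq_abs]; congr 1; rw [e1]; simp; ring
        _ ≤ M3 / 2 * ‖v‖ ^ 3 / 3 := key
        _ = M3 / 6 * ‖v‖ ^ 3 := by ring
    · intro t ht
      have e : f (a + t • v) v - f a v - t * B a v v
          = (f (a + t • v) - f a - B a (t • v)) v := by
        simp [ContinuousLinearMap.sub_apply, map_smul, ContinuousLinearMap.smul_apply]
      rw [Real.norm_eq_abs, e]
      have h1 : |(f (a + t • v) - f a - B a (t • v)) v|
          ≤ ‖f (a + t • v) - f a - B a (t • v)‖ * ‖v‖ := by
        simpa using (f (a + t • v) - f a - B a (t • v)).le_opNorm v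
      have h2 := L3 a (t • v)
      have h3 : ‖t • v‖ = t * ‖v‖ := by simp [norm_smul, abs_of_nonneg ht.1]
      rw [h3] at h2
      have hv : (0:ℝ) ≤ ‖v‖ := norm_nonneg v
      calc |(f (a + t • v) - f a - B a (t • v)) v|
          ≤ (M3 / 2 * (t * ‖v‖) ^ 2) * ‖v‖ := by
            nlinarith [norm_nonneg (f (a + t • v) - f a - B a (t • v))]
        _ = M3 / 2 * ‖v‖ ^ 3 * t ^ 2 := by ring
  -- helper operator-norm bounds
  have op1 : ∀ (L : EuclideanSpace ℝ (Fin d) →L[ℝ] ℝ) (v : EuclideanSpace ℝ (Fin d)) (c : ℝ),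
      ‖L‖ ≤ c → |L v| ≤ c * ‖v‖ := by
    intro L v c hc
    rw [← Real.norm_eq_abs]
    exact (L.le_opNorm v).trans (mul_le_mul_of_nonneg_right hc (norm_nonneg v))
  have op2 : ∀ (T : EuclideanSpace ℝ (Fin d) →L[ℝ]
        (EuclideanSpace ℝ (Fin d) →L[ℝ] ℝ)) (a b : EuclideanSpace ℝ (Fin d)) (c : ℝ),
      ‖T‖ ≤ c → |T a b| ≤ c * (‖a‖ * ‖b‖) := by
    intro T a b c hc
    rw [← Real.norm_eq_abs]
    calc ‖T a b‖ ≤ ‖T a‖ * ‖b‖ := (T a).le_opNorm b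
      _ ≤ (‖T‖ * ‖a‖) * ‖b‖ := mul_le_mul_of_nonneg_right (T.le_opNorm a) (norm_nonneg b)
      _ ≤ (c * ‖a‖) * ‖b‖ := mul_le_mul_of_nonneg_right
          (mul_le_mul_of_nonneg_right hc (norm_nonneg a)) (norm_nonneg b)
      _ = c * (‖a‖ * ‖b‖) := mul_assoc c _ _
  -- the fourteen pieces
  set T1 : ℝ := lam * ((f z - f x) ((y - x) - (y' - x'))) with hT1
  set T2 : ℝ := lam * ((f z - f x - B x (z - x)) (y' - x')) with hT2
  set T3 : ℝ := -(lam' * ((f z' - f x' - B x' (z' - x')) (y' - x'))) with hT3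
  set T4 : ℝ := (B x (lam • (z - x) - lam' • (z' - x'))) (y' - x') with hT4
  set T5 : ℝ := lam' * (((B x - B x') (z' - x')) (y' - x')) with hT5
  set T6 : ℝ := lam' * ((f z - f z') ((w' - z') - (y' - x'))) with hT6
  set T7 : ℝ := lam / 2 * (B z ((w - z) - (y - x)) ((w - z) + (y - x))) with hT7
  set T8 : ℝ := -(lam' / 2 * (B z' ((w' - z') - (y' - x')) ((w' - z') + (y' - x')))) with hT8
  set T9 : ℝ := lam * (h w - h z - f z (w - z) - 1 / 2 * B z (w - z) (w - z)) with hT9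
  set T10 : ℝ := -(lam * (h y - h x - f x (y - x) - 1 / 2 * B x (y - x) (y - x))) with hT10
  set T11 : ℝ := -(lam' * (h w' - h z' - f z' (w' - z') - 1 / 2 * B z' (w' - z') (w' - z'))) with hT11
  set T12 : ℝ := lam' * (h y' - h x' - f x' (y' - x') - 1 / 2 * B x' (y' - x') (y' - x')) with hT12
  set T13 : ℝ := -(lam * (1 / 2) * (((B x - B z) (y - x)) (y - x))) with hT13
  set T14 : ℝ := lam' * (1 / 2) * (((B x' - B z') (y' - x')) (y' - x')) with hT14
  -- the key algebraic identity
  have key : lam * (h x - h y - (h z - h w)) - lam' * (h x' - h y' - (h z' - h w'))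
      - (lam * f z (x - y - (z - w)) - lam' * f z (x' - y' - (z' - w')))
      = T1 + T2 + T3 + T4 + T5 + T6 + T7 + T8 + T9 + T10 + T11 + T12 + T13 + T14 := by
    have hs7 : B z ((w - z) - (y - x)) ((w - z) + (y - x))
        = B z (w - z) (w - z) - B z (y - x) (y - x) := by
      have hsy := hBsymm z (w - z) (y - x)
      simp only [map_sub, map_add, ContinuousLinearMap.sub_apply,
        ContinuousLinearMap.add_apply] at *
      linarith
    have hs8 : B z' ((w' - z') - (y' - x')) ((w' - z') + (y' - x'))
        = B z' (w' - z') (w' - z') - B z' (y' - x') (y' - x') := by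
      have hsy := hBsymm z' (w' - z') (y' - x')
      simp only [map_sub, map_add, ContinuousLinearMap.sub_apply,
        ContinuousLinearMap.add_apply] at *
      linarith
    rw [hT1, hT2, hT3, hT4, hT5, hT6, hT7, hT8, hT9, hT10, hT11, hT12, hT13, hT14, hs7, hs8]
    simp only [ContinuousLinearMap.sub_apply, map_sub, map_smul, smul_eq_mul,
      ContinuousLinearMap.smul_apply]
    ring
  -- bounds on the pieces
  have b1 : |T1| ≤ lam * (M2 * ‖z - x‖ * ‖(y - x) - (y' - x')‖) := by
    rw [hT1, abs_mul, abs_of_pos hlam]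
    refine mul_le_mul_of_nonneg_left ?_ hlam.le
    have := op1 (f z - f x) ((y - x) - (y' - x')) (M2 * ‖z - x‖) (hM2 z x)
    linarith
  have b2 : |T2| ≤ lam * (M3 / 2 * ‖z - x‖ ^ 2 * ‖y' - x'‖) := by
    rw [hT2, abs_mul, abs_of_pos hlam]
    refine mul_le_mul_of_nonneg_left ?_ hlam.le
    have hL := L3 x (z - x)
    rw [show x + (z - x) = z from by abel] at hL
    have := op1 (f z - f x - B x (z - x)) (y' - x') (M3 / 2 * ‖z - x‖ ^ 2) hL
    linarith
  have b3 : |T3| ≤ lam' * (M3 / 2 * ‖z' - x'‖ ^ 2 * ‖y' - x'‖) := by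
    rw [hT3, abs_neg, abs_mul, abs_of_pos hlam']
    refine mul_le_mul_of_nonneg_left ?_ hlam'.le
    have hL := L3 x' (z' - x')
    rw [show x' + (z' - x') = z' from by abel] at hL
    have := op1 (f z' - f x' - B x' (z' - x')) (y' - x') (M3 / 2 * ‖z' - x'‖ ^ 2) hL
    linarith
  have b4 : |T4| ≤ M2 * (‖lam • (z - x) - lam' • (z' - x')‖ * ‖y' - x'‖) := by
    rw [hT4]
    exact op2 (B x) _ _ M2 (hB2 x)
  have b5 : |T5| ≤ lam' * (M3 * ‖x - x'‖ * (‖z' - x'‖ * ‖y' - x'‖)) := by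
    rw [hT5, abs_mul, abs_of_pos hlam']
    exact mul_le_mul_of_nonneg_left (op2 (B x - B x') _ _ (M3 * ‖x - x'‖) (hB3 x x')) hlam'.le
  have b6 : |T6| ≤ lam' * (M2 * ‖z - z'‖ * ‖x' - y' - (z' - w')‖) := by
    rw [hT6, abs_mul, abs_of_pos hlam']
    refine mul_le_mul_of_nonneg_left ?_ hlam'.le
    rw [show (w' - z') - (y' - x') = x' - y' - (z' - w') from by abel]
    have := op1 (f z - f z') (x' - y' - (z' - w')) (M2 * ‖z - z'‖) (hM2 z z')
    linarith
  have b7 : |T7| ≤ lam / 2 * (M2 * (‖x - y - (z - w)‖ * ‖x - y + z - w‖)) := by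
    rw [hT7, abs_mul, abs_of_pos (by positivity : (0:ℝ) < lam / 2)]
    rw [show (w - z) - (y - x) = x - y - (z - w) from by abel,
      show (w - z) + (y - x) = -(x - y + z - w) from by abel]
    refine mul_le_mul_of_nonneg_left ?_ (by positivity)
    have := op2 (B z) (x - y - (z - w)) (-(x - y + z - w)) M2 (hB2 z)
    rwa [norm_neg] at this
  have b8 : |T8| ≤ lam' / 2 * (M2 * (‖x' - y' - (z' - w')‖ * ‖x' - y' + z' - w'‖)) := by
    rw [hT8, abs_neg, abs_mul, abs_of_pos (by positivity : (0:ℝ) < lam' / 2)]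
    rw [show (w' - z') - (y' - x') = x' - y' - (z' - w') from by abel,
      show (w' - z') + (y' - x') = -(x' - y' + z' - w') from by abel]
    refine mul_le_mul_of_nonneg_left ?_ (by positivity)
    have := op2 (B z') (x' - y' - (z' - w')) (-(x' - y' + z' - w')) M2 (hB2 z')
    rwa [norm_neg] at this
  have b9 : |T9| ≤ lam * (M3 / 6 * ‖w - z‖ ^ 3) := by
    rw [hT9, abs_mul, abs_of_pos hlam]
    refine mul_le_mul_of_nonneg_left ?_ hlam.le
    have := L2 z (w - z)
    rwa [show z + (w - z) = w from by abel] at this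
  have b10 : |T10| ≤ lam * (M3 / 6 * ‖y - x‖ ^ 3) := by
    rw [hT10, abs_neg, abs_mul, abs_of_pos hlam]
    refine mul_le_mul_of_nonneg_left ?_ hlam.le
    have := L2 x (y - x)
    rwa [show x + (y - x) = y from by abel] at this
  have b11 : |T11| ≤ lam' * (M3 / 6 * ‖w' - z'‖ ^ 3) := by
    rw [hT11, abs_neg, abs_mul, abs_of_pos hlam']
    refine mul_le_mul_of_nonneg_left ?_ hlam'.le
    have := L2 z' (w' - z')
    rwa [show z' + (w' - z') = w' from by abel] at this
  have b12 : |T12| ≤ lam' * (M3 / 6 * ‖y' - x'‖ ^ 3) := by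
    rw [hT12, abs_mul, abs_of_pos hlam']
    refine mul_le_mul_of_nonneg_left ?_ hlam'.le
    have := L2 x' (y' - x')
    rwa [show x' + (y' - x') = y' from by abel] at this
  have b13 : |T13| ≤ lam * (1 / 2) * (M3 * ‖z - x‖ * (‖y - x‖ * ‖y - x‖)) := by
    rw [hT13, abs_neg, abs_mul, abs_of_pos (by positivity : (0:ℝ) < lam * (1 / 2))]
    refine mul_le_mul_of_nonneg_left ?_ (by positivity)
    have := op2 (B x - B z) (y - x) (y - x) (M3 * ‖x - z‖) (hB3 x z)
    rw [norm_sub_rev x z] at this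
    linarith
  have b14 : |T14| ≤ lam' * (1 / 2) * (M3 * ‖z' - x'‖ * (‖y' - x'‖ * ‖y' - x'‖)) := by
    rw [hT14, abs_mul, abs_of_pos (by positivity : (0:ℝ) < lam' * (1 / 2))]
    refine mul_le_mul_of_nonneg_left ?_ (by positivity)
    have := op2 (B x' - B z') (y' - x') (y' - x') (M3 * ‖x' - z'‖) (hB3 x' z')
    rw [norm_sub_rev x' z'] at this
    linarith
  -- rewrite the gradient inner product
  have hgrad : ⟪gradient h z, lam • (x - y - (z - w)) - lam' • (x' - y' - (z' - w'))⟫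
      = lam * f z (x - y - (z - w)) - lam' * f z (x' - y' - (z' - w')) := by
    rw [gradient, InnerProductSpace.toDual_symm_apply, ← hfdef]
    simp only [map_sub, map_smul, smul_eq_mul]
  -- assembly
  have step : ∀ a b c e : ℝ, |a| ≤ c → |b| ≤ e → |a + b| ≤ c + e := fun a b c e ha hb =>
    (abs_add_le a b).trans (add_le_add ha hb)
  have c2 := step _ _ _ _ b1 b2
  have c3 := step _ _ _ _ c2 b3
  have c4 := step _ _ _ _ c3 b4
  have c5 := step _ _ _ _ c4 b5
  have c6 := step _ _ _ _ c5 b6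
  have c7 := step _ _ _ _ c6 b7
  have c8 := step _ _ _ _ c7 b8
  have c9 := step _ _ _ _ c8 b9
  have c10 := step _ _ _ _ c9 b10
  have c11 := step _ _ _ _ c10 b11
  have c12 := step _ _ _ _ c11 b12
  have c13 := step _ _ _ _ c12 b13
  have c14 := step _ _ _ _ c13 b14
  rw [hgrad, key]
  refine c14.trans (le_of_eq ?_)
  ring
end

section
/- Let h be in C^3(R^d) and let x, y, z, w in R^d. Then | <Hess h(z)(w - z), w - z> - <Hess h(x)(y - x), y - x> | <= M_2(h) * ||x - y - (z - w)||_2 * ||x - y + z - w||_2 + M_3(h) * ||z - x||_2 * ||y - x||_2^2. -/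
open scoped RealInnerProductSpace

set_option maxHeartbeats 1000000 in
/-- Hessian quadratic-form difference bound: for `h ∈ C³(ℝ^d)` and `x, y, z, w ∈ ℝ^d`,
`|⟨∇²h(z)(w - z), w - z⟩ - ⟨∇²h(x)(y - x), y - x⟩|
  ≤ M₂(h) ‖x - y - (z - w)‖ ‖x - y + z - w‖ + M₃(h) ‖z - x‖ ‖y - x‖²`,
where `M₂(h) ≤ M2` is the Lipschitz constant of the gradient and `M₃(h) ≤ M3` that of the
Hessian (`ℓ₂` operator norms). -/
theorem hessian_quadratic_difference_bound {d : ℕ}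
    (h : EuclideanSpace ℝ (Fin d) → ℝ) (hh : ContDiff ℝ 3 h)
    (x y z w : EuclideanSpace ℝ (Fin d))
    (M2 M3 : ℝ)
    (hM2 : ∀ a b, ‖fderiv ℝ h a - fderiv ℝ h b‖ ≤ M2 * ‖a - b‖)
    (hM3 : ∀ a b, ‖iteratedFDeriv ℝ 2 h a - iteratedFDeriv ℝ 2 h b‖ ≤ M3 * ‖a - b‖) :
    |iteratedFDeriv ℝ 2 h z ![w - z, w - z] - iteratedFDeriv ℝ 2 h x ![y - x, y - x]|
      ≤ M2 * ‖x - y - (z - w)‖ * ‖x - y + z - w‖ + M3 * ‖z - x‖ * ‖y - x‖ ^ 2 := by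
  rcases subsingleton_or_nontrivial (EuclideanSpace ℝ (Fin d)) with hs | hs
  · have h1 : iteratedFDeriv ℝ 2 h z ![w - z, w - z] = 0 := by
      rw [Subsingleton.elim (w - z) (0 : EuclideanSpace ℝ (Fin d))]
      exact (iteratedFDeriv ℝ 2 h z).map_coord_zero 0 (by simp)
    have h2 : iteratedFDeriv ℝ 2 h x ![y - x, y - x] = 0 := by
      rw [Subsingleton.elim (y - x) (0 : EuclideanSpace ℝ (Fin d))]
      exact (iteratedFDeriv ℝ 2 h x).map_coord_zero 0 (by simp)
    rw [h1, h2,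
      Subsingleton.elim (x - y - (z - w)) (0 : EuclideanSpace ℝ (Fin d)),
      Subsingleton.elim (x - y + z - w) (0 : EuclideanSpace ℝ (Fin d)),
      Subsingleton.elim (z - x) (0 : EuclideanSpace ℝ (Fin d)),
      Subsingleton.elim (y - x) (0 : EuclideanSpace ℝ (Fin d))]
    simp
  · -- nonnegativity of constants
    obtain ⟨a, b, hab⟩ := exists_pair_ne (EuclideanSpace ℝ (Fin d))
    have hab' : 0 < ‖a - b‖ := by simpa [sub_ne_zero] using norm_pos_iff.2 (sub_ne_zero.2 hab)
    have hM2' : 0 ≤ M2 := by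
      nlinarith [hM2 a b, norm_nonneg (fderiv ℝ h a - fderiv ℝ h b)]
    set u := w - z with hu
    set v := y - x with hv
    have hsymm : ∀ p q, fderiv ℝ (fderiv ℝ h) z p q = fderiv ℝ (fderiv ℝ h) z q p :=
      (hh.contDiffAt.isSymmSndFDerivAt (by norm_num))
    -- bound on the operator norm of the second derivative
    have hlip : LipschitzWith ⟨M2, hM2'⟩ (fderiv ℝ h) :=
      LipschitzWith.of_dist_le_mul fun a b => by rw [dist_eq_norm, dist_eq_norm]; exact hM2 a b
    have hGz : ‖fderiv ℝ (fderiv ℝ h) z‖ ≤ M2 := norm_fderiv_le_of_lipschitz ℝ hlip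
    -- first piece
    have key1 : iteratedFDeriv ℝ 2 h z ![u, u] - iteratedFDeriv ℝ 2 h z ![v, v]
        = fderiv ℝ (fderiv ℝ h) z (u - v) (u + v) := by
      rw [iteratedFDeriv_two_apply, iteratedFDeriv_two_apply]
      simp only [Matrix.cons_val_zero, Matrix.cons_val_one, Matrix.head_cons, map_sub, map_add,
        ContinuousLinearMap.sub_apply, ContinuousLinearMap.add_apply]
      rw [hsymm v u]
      ring
    have b1 : |iteratedFDeriv ℝ 2 h z ![u, u] - iteratedFDeriv ℝ 2 h z ![v, v]|
        ≤ M2 * ‖u - v‖ * ‖u + v‖ := by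
      rw [key1]
      calc |fderiv ℝ (fderiv ℝ h) z (u - v) (u + v)|
          ≤ ‖fderiv ℝ (fderiv ℝ h) z‖ * ‖u - v‖ * ‖u + v‖ :=
            (fderiv ℝ (fderiv ℝ h) z).le_opNorm₂ (u - v) (u + v)
        _ ≤ M2 * ‖u - v‖ * ‖u + v‖ := by
            gcongr
    -- second piece
    have prod_eq : (∏ i, ‖(![v, v] : Fin 2 → EuclideanSpace ℝ (Fin d)) i‖) = ‖v‖ ^ 2 := by
      rw [Fin.prod_univ_two]; simp [sq]
    have b2 : |iteratedFDeriv ℝ 2 h z ![v, v] - iteratedFDeriv ℝ 2 h x ![v, v]|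
        ≤ M3 * ‖z - x‖ * ‖v‖ ^ 2 := by
      rw [← Real.norm_eq_abs,
        ← ContinuousMultilinearMap.sub_apply (iteratedFDeriv ℝ 2 h z) (iteratedFDeriv ℝ 2 h x)]
      refine le_trans ((iteratedFDeriv ℝ 2 h z - iteratedFDeriv ℝ 2 h x).le_opNorm ![v, v]) ?_
      rw [prod_eq]
      exact mul_le_mul_of_nonneg_right (hM3 z x) (by positivity)
    -- norms identification
    have e1 : ‖x - y - (z - w)‖ = ‖u - v‖ := by
      rw [hu, hv]; congr 1; abel
    have e2 : ‖x - y + z - w‖ = ‖u + v‖ := by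
      rw [hu, hv, ← norm_neg]; congr 1; abel
    rw [e1, e2]
    calc |iteratedFDeriv ℝ 2 h z ![u, u] - iteratedFDeriv ℝ 2 h x ![v, v]|
        ≤ |iteratedFDeriv ℝ 2 h z ![u, u] - iteratedFDeriv ℝ 2 h z ![v, v]|
          + |iteratedFDeriv ℝ 2 h z ![v, v] - iteratedFDeriv ℝ 2 h x ![v, v]| := by
          exact abs_sub_le _ _ _
      _ ≤ M2 * ‖u - v‖ * ‖u + v‖ + M3 * ‖z - x‖ * ‖v‖ ^ 2 := add_le_add b1 b2
end
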